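/- Let β_FF, β_FB, β_BF, β_BB be nonnegative real numbers, let φ be a real number, and let A_FF, A_FB, A_BF, A_BB be complex numbers. Then the determinant of the C-PASS effective channel matrix M satisfies det M = (A_FF·A_BB − A_FB·A_BF) · (√(β_FF·β_BB) − √(β_FB·β_BF)·e^{−2iφ}). -/
import Mathlib


open Matrix Complex

/-- The C-PASS effective channel matrix. -/
noncomputable def CPASSMatrix (βFF βFB βBF βBB φ : ℝ) (AFF AFB ABF ABB : ℂ) :
    Matrix (Fin 2) (Fin 2) ℂ :=
  !![(Real.sqrt βFF : ℂ) * AFF + (Real.sqrt βFB : ℂ) * ABF * Complex.exp (-(Complex.I * φ)),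
     (Real.sqrt βFF : ℂ) * AFB + (Real.sqrt βFB : ℂ) * ABB * Complex.exp (-(Complex.I * φ));
     (Real.sqrt βBF : ℂ) * AFF * Complex.exp (-(Complex.I * φ)) + (Real.sqrt βBB : ℂ) * ABF,
     (Real.sqrt βBF : ℂ) * AFB * Complex.exp (-(Complex.I * φ)) + (Real.sqrt βBB : ℂ) * ABB]

theorem cpass_det (βFF βFB βBF βBB : ℝ) (hFF : 0 ≤ βFF) (hFB : 0 ≤ βFB)
    (hBF : 0 ≤ βBF) (hBB : 0 ≤ βBB) (φ : ℝ) (AFF AFB ABF ABB : ℂ) :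
    (CPASSMatrix βFF βFB βBF βBB φ AFF AFB ABF ABB).det =
      (AFF * ABB - AFB * ABF) *
        ((Real.sqrt (βFF * βBB) : ℂ) -
          (Real.sqrt (βFB * βBF) : ℂ) * Complex.exp (-(2 * Complex.I * φ))) := by
  have h1 : Real.sqrt (βFF * βBB) = Real.sqrt βFF * Real.sqrt βBB :=
    Real.sqrt_mul hFF _
  have h2 : Real.sqrt (βFB * βBF) = Real.sqrt βFB * Real.sqrt βBF :=
    Real.sqrt_mul hFB _
  have h3 : Complex.exp (-(2 * Complex.I * φ)) =
      Complex.exp (-(Complex.I * φ)) * Complex.exp (-(Complex.I * φ)) := by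
    rw [← Complex.exp_add]; ring_nf
  rw [CPASSMatrix, Matrix.det_fin_two_of, h1, h2, h3]
  push_cast
  ring
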